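/- For every nonempty compact subset A of ℝⁿ, Schneider's non-convexity index satisfies c(A) ≤ n. -/

import Mathlib

open MeasureTheory
open scoped Pointwise

lemma schneider_key {n : ℕ} (hn : 0 < n) (A : Set (EuclideanSpace ℝ (Fin n)))
    {x : EuclideanSpace ℝ (Fin n)} (hx : x ∈ convexHull ℝ A) :
    ((n : ℝ) + 1) • x ∈ A + (n : ℝ) • convexHull ℝ A := by
  classical
  obtain ⟨ι, hι, z, w, hzA, hai, hw0, hw1, hxs⟩ := eq_pos_convex_span_of_mem_convexHull hx
  have hcard : (Fintype.card ι : ℝ) ≤ (n : ℝ) + 1 := by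
    have h1 := hai.card_le_finrank_succ
    have h2 : Module.finrank ℝ (vectorSpan ℝ (Set.range z)) ≤ n := by
      simpa using (Submodule.finrank_le (vectorSpan ℝ (Set.range z)))
    exact_mod_cast h1.trans (by omega)
  have hne : Nonempty ι := by
    by_contra h
    rw [not_nonempty_iff] at h
    simp [Finset.univ_eq_empty] at hw1
  have hn1 : (0 : ℝ) < (n : ℝ) + 1 := by positivity
  obtain ⟨j, hj⟩ : ∃ j : ι, 1 ≤ ((n : ℝ) + 1) * w j := by
    by_contra h
    push_neg at h
    have hlt : ∑ i : ι, w i < ∑ _i : ι, 1 / ((n : ℝ) + 1) := by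
      refine Finset.sum_lt_sum_of_nonempty Finset.univ_nonempty fun i _ => ?_
      rw [lt_div_iff₀ hn1, mul_comm]
      exact h i
    rw [hw1, Finset.sum_const, Finset.card_univ, nsmul_eq_mul] at hlt
    have : (Fintype.card ι : ℝ) * (1 / ((n : ℝ) + 1)) ≤ 1 := by
      rw [mul_one_div, div_le_one hn1]; exact hcard
    linarith
  set w' : ι → ℝ := fun i => ((n : ℝ) + 1) * w i - (if i = j then 1 else 0) with hw'
  have hw'0 : ∀ i, 0 ≤ w' i := by
    intro i
    simp only [hw']
    split
    · next h => subst h; linarith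
    · nlinarith [hw0 i, hn1]
  have hw'sum : ∑ i : ι, w' i = n := by
    simp only [hw', Finset.sum_sub_distrib, ← Finset.mul_sum, hw1,
      Finset.sum_ite_eq' Finset.univ j (fun _ => (1 : ℝ)), Finset.mem_univ, if_pos]
    ring
  have hnR : (0 : ℝ) < (n : ℝ) := by exact_mod_cast hn
  set c := Finset.univ.centerMass w' z with hc
  have hcmem : c ∈ convexHull ℝ A := by
    refine Finset.univ.centerMass_mem_convexHull (fun i _ => hw'0 i) ?_ fun i _ => hzA ⟨i, rfl⟩
    rw [hw'sum]; exact hnR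
  have hsum : ∑ i : ι, w' i • z i = ((n : ℝ) + 1) • x - z j := by
    have : ∀ i : ι, w' i • z i =
        ((n : ℝ) + 1) • (w i • z i) - (if i = j then z i else 0) := by
      intro i
      by_cases hij : i = j
      · subst hij; simp [hw', sub_smul, mul_smul]
      · simp [hw', hij, sub_smul, mul_smul]
    rw [Finset.sum_congr rfl fun i _ => this i, Finset.sum_sub_distrib, ← Finset.smul_sum, hxs,
      Finset.sum_ite_eq' Finset.univ j z, if_pos (Finset.mem_univ j)]
  have hnc : (n : ℝ) • c = ((n : ℝ) + 1) • x - z j := by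
    rw [hc, Finset.centerMass, hw'sum, smul_inv_smul₀ hnR.ne', hsum]
  refine Set.mem_add.2 ⟨z j, hzA ⟨j, rfl⟩, (n : ℝ) • c, Set.smul_mem_smul_set hcmem, ?_⟩
  rw [hnc]; abel

theorem schneiderIndex_le_dim' {n : ℕ} (A : Set (EuclideanSpace ℝ (Fin n)))
    (hne : A.Nonempty) (hcpt : IsCompact A) :
    sInf {l : ℝ | 0 ≤ l ∧ Convex ℝ (A + l • convexHull ℝ A)} ≤ n := by
  have hconv : Convex ℝ (A + (n : ℝ) • convexHull ℝ A) := by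
    rcases Nat.eq_zero_or_pos n with hn | hn
    · subst hn
      haveI : Subsingleton (EuclideanSpace ℝ (Fin 0)) :=
        ⟨fun a b => by ext i; exact i.elim0⟩
      intro x hx y hy a b _ _ _
      rwa [Subsingleton.elim (a • x + b • y) x]
    · have hn1 : (0 : ℝ) < (n : ℝ) + 1 := by positivity
      have heq : A + (n : ℝ) • convexHull ℝ A = ((n : ℝ) + 1) • convexHull ℝ A := by
        apply Set.Subset.antisymm
        · rintro _ ⟨a, ha, _, ⟨y, hy, rfl⟩, rfl⟩
          refine ⟨(1 / ((n : ℝ) + 1)) • a + ((n : ℝ) / ((n : ℝ) + 1)) • y, ?_, ?_⟩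
          · exact (convex_convexHull ℝ A) (subset_convexHull ℝ A ha) hy
              (by positivity) (by positivity) (by field_simp; ring)
          · show ((n : ℝ) + 1) • ((1 / ((n : ℝ) + 1)) • a + ((n : ℝ) / ((n : ℝ) + 1)) • y)
                = a + (n : ℝ) • y
            rw [smul_add, smul_smul, smul_smul]
            rw [mul_one_div, div_self hn1.ne', mul_div_cancel₀ _ hn1.ne', one_smul]
        · rintro _ ⟨y, hy, rfl⟩
          exact schneider_key hn A hy
      rw [heq]
      exact (convex_convexHull ℝ A).smul _
  exact csInf_le ⟨0, fun l hl => hl.1⟩ ⟨Nat.cast_nonneg n, hconv⟩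

/-- **Schneider's non-convexity index**: `c(A) = inf {λ ≥ 0 : A + λ·conv(A) is convex}`,
where the sum is a Minkowski sum. -/
noncomputable def schneiderIndex {n : ℕ} (A : Set (EuclideanSpace ℝ (Fin n))) : ℝ :=
  sInf {l : ℝ | 0 ≤ l ∧ Convex ℝ (A + l • convexHull ℝ A)}

/-- **Schneider's theorem** (Theorem 2.14 in Fradelizi–Madiman–Marsiglietti–Zvavitch):
for every nonempty compact `A ⊆ ℝⁿ`, Schneider's non-convexity index satisfies
`c(A) ≤ n`. -/
theorem schneiderIndex_le_dim {n : ℕ} (A : Set (EuclideanSpace ℝ (Fin n)))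
    (hne : A.Nonempty) (hcpt : IsCompact A) :
    schneiderIndex A ≤ n := by
  unfold schneiderIndex
  exact schneiderIndex_le_dim' A hne hcpt
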